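/- Let R be a discrete valuation ring with maximal ideal m, let I = m^d be a nonzero proper ideal, and let H be a finite R-module with H[m] ⊆ IH. If M is a finite R-module with IM ≅ IH as R-modules, then there exists a finite R-module B annihilated by I such that M ≅ H ⊕ B. -/

import Mathlib

set_option linter.unusedSectionVars false
set_option linter.unusedVariables false

open IsLocalRing Submodule
open scoped DirectSum

section Aux

universe u
variable {R : Type u} [CommRing R] [IsDomain R] [IsDiscreteValuationRing R]

/-- A finite module over a DVR is torsion. -/
theorem aux_finite_isTorsion (M : Type*) [AddCommGroup M] [Module R M] [Finite M] :
    Module.IsTorsion R M := by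
  intro x
  have hR : ¬ Finite R := by
    intro h
    exact IsDiscreteValuationRing.not_isField R (Finite.isField_of_domain R)
  have : ¬ Function.Injective (LinearMap.toSpanSingleton R M x) := by
    intro h
    exact hR (Finite.of_injective _ h)
  rw [Function.not_injective_iff] at this
  obtain ⟨a, b, hab, hne⟩ := this
  refine ⟨⟨a - b, mem_nonZeroDivisors_of_ne_zero (sub_ne_zero.2 hne)⟩, ?_⟩
  simpa [LinearMap.toSpanSingleton_apply, sub_smul, sub_eq_zero] using hab

/-- Structure theorem: a finite module over a DVR is a finite product of `R ⧸ 𝔪 ^ eᵢ`. -/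
theorem aux_exists_pi_equiv (M : Type*) [AddCommGroup M] [Module R M] [Finite M] :
    ∃ (n : ℕ) (e : Fin n → ℕ),
      Nonempty (M ≃ₗ[R] ∀ i : Fin n, R ⧸ (maximalIdeal R ^ (e i) : Ideal R)) := by
  obtain ⟨n0, ⟨efin⟩⟩ := Finite.exists_equiv_fin M
  haveI : Small.{u} M := small_map efin
  haveI : Module.Finite R (Shrink.{u} M) := Module.Finite.equiv ((Shrink.linearEquiv.{u} R M).symm)
  have htors : Module.IsTorsion R (Shrink.{u} M) := aux_finite_isTorsion _
  obtain ⟨ι, hfin, p, hp, e, ⟨eq1⟩⟩ :=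
    Module.equiv_directSum_of_isTorsion (R := R) (M := Shrink.{u} M) htors
  haveI := hfin
  refine ⟨Fintype.card ι, fun j => e ((Fintype.equivFin ι).symm j), ?_⟩
  have key : ∀ i : ι, (Submodule.span R {p i ^ e i} : Submodule R R)
      = (maximalIdeal R ^ (e i) : Ideal R) := by
    intro i
    rw [Ideal.submodule_span_eq, ← Ideal.span_singleton_pow, ← (hp i).maximalIdeal_eq]
  let E1 : (⨁ i : ι, R ⧸ (Submodule.span R {p i ^ e i} : Submodule R R)) ≃ₗ[R]
      ∀ i : ι, R ⧸ (Submodule.span R {p i ^ e i} : Submodule R R) :=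
    DirectSum.linearEquivFunOnFintype R ι _
  let E2 : (∀ i : ι, R ⧸ (Submodule.span R {p i ^ e i} : Submodule R R)) ≃ₗ[R]
      ∀ i : ι, R ⧸ (maximalIdeal R ^ (e i) : Ideal R) :=
    LinearEquiv.piCongrRight (fun i => Submodule.quotEquivOfEq _ _ (key i))
  let E3 : (∀ i : ι, R ⧸ (maximalIdeal R ^ (e i) : Ideal R)) ≃ₗ[R]
      ∀ j : Fin (Fintype.card ι), R ⧸ (maximalIdeal R ^
        (e ((Fintype.equivFin ι).symm j)) : Ideal R) :=
    LinearEquiv.piCongrLeft' R (fun i => R ⧸ (maximalIdeal R ^ (e i) : Ideal R))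
      (Fintype.equivFin ι)
  exact ⟨((((Shrink.linearEquiv.{u} R M).symm).trans eq1).trans E1).trans (E2.trans E3)⟩

/-- `J • ⊤` in a quotient `R ⧸ K` is the image of `J`. -/
theorem aux_smul_top_quotient (J K : Ideal R) :
    J • (⊤ : Submodule R (R ⧸ K)) = Submodule.map K.mkQ (J : Submodule R R) := by
  conv_lhs => rw [← Submodule.range_mkQ K, ← Submodule.map_top]
  rw [← Submodule.map_smul'']
  congr 1
  rw [smul_eq_mul, Ideal.mul_top]

/-- `J • ⊤` in a finite product is computed componentwise. -/
theorem aux_smul_top_pi {ι : Type*} [Fintype ι] [DecidableEq ι] (A : ι → Type*)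
    [∀ i, AddCommGroup (A i)] [∀ i, Module R (A i)] (J : Ideal R) :
    J • (⊤ : Submodule R (∀ i, A i)) =
      Submodule.pi Set.univ (fun i => J • (⊤ : Submodule R (A i))) := by
  apply le_antisymm
  · rw [Submodule.smul_le]
    intro r hr x _
    rw [Submodule.mem_pi]
    intro i _
    exact Submodule.smul_mem_smul hr trivial
  · intro x hx
    rw [Submodule.mem_pi] at hx
    rw [← Finset.univ_sum_single x]
    apply Submodule.sum_mem
    intro i _
    have h1 : Pi.single (M := A) i (x i) ∈
        Submodule.map (LinearMap.single R A i) (J • (⊤ : Submodule R (A i))) :=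
      Submodule.mem_map_of_mem (hx i trivial)
    rw [Submodule.map_smul''] at h1
    exact (smul_mono_right J le_top : _ ≤ J • (⊤ : Submodule R (∀ i, A i))) h1

/-- The submodule `pi univ p` is isomorphic to the product of the `p i`. -/
def auxPiSubmoduleEquiv {ι : Type*} (A : ι → Type*)
    [∀ i, AddCommGroup (A i)] [∀ i, Module R (A i)] (p : ∀ i, Submodule R (A i)) :
    ↥(Submodule.pi Set.univ p) ≃ₗ[R] ∀ i, ↥(p i) where
  toFun x i := ⟨x.1 i, x.2 i trivial⟩
  invFun x := ⟨fun i => x i, fun i _ => (x i).2⟩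
  map_add' x y := rfl
  map_smul' r x := rfl
  left_inv x := rfl
  right_inv x := rfl

/-- `𝔪^k • ⊤` inside `R ⧸ 𝔪^e` is isomorphic to `R ⧸ 𝔪^(e-k)`. -/
theorem aux_cyclic_smul_equiv (k e : ℕ) :
    Nonempty (↥((maximalIdeal R ^ k : Ideal R) •
        (⊤ : Submodule R (R ⧸ (maximalIdeal R ^ e : Ideal R)))) ≃ₗ[R]
      R ⧸ (maximalIdeal R ^ (e - k) : Ideal R)) := by
  obtain ⟨π, hπ⟩ := IsDiscreteValuationRing.exists_irreducible R
  have hm : maximalIdeal R = Ideal.span {π} := hπ.maximalIdeal_eq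
  have hmk : ∀ t : ℕ, (maximalIdeal R ^ t : Ideal R) = Ideal.span {π ^ t} := by
    intro t; rw [hm, Ideal.span_singleton_pow]
  set K : Ideal R := maximalIdeal R ^ e with hK
  let φ : R →ₗ[R] R ⧸ K :=
    LinearMap.toSpanSingleton R _ (Submodule.Quotient.mk (π ^ k))
  have hrange : LinearMap.range φ =
      (maximalIdeal R ^ k : Ideal R) • (⊤ : Submodule R (R ⧸ K)) := by
    rw [aux_smul_top_quotient, hmk k]
    simp only [φ]
    rw [Ideal.span, Submodule.map_span, Set.image_singleton,
      ← LinearMap.span_singleton_eq_range, Submodule.mkQ_apply]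
  have hker : LinearMap.ker φ = (maximalIdeal R ^ (e - k) : Ideal R) := by
    ext r
    simp only [LinearMap.mem_ker, φ, LinearMap.toSpanSingleton_apply,
      ← Submodule.Quotient.mk_smul, Submodule.Quotient.mk_eq_zero, smul_eq_mul]
    rw [hK, hmk e, hmk (e - k), Ideal.mem_span_singleton, Ideal.mem_span_singleton]
    rcases le_or_gt e k with h | h
    · have he : e - k = 0 := by omega
      rw [he, pow_zero]
      constructor
      · intro _; exact one_dvd r
      · intro _
        refine ⟨r * π ^ (k - e), ?_⟩
        rw [← mul_assoc, mul_comm (π ^ e) r, mul_assoc, ← pow_add]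
        congr 2
        omega
    · have hsplit : π ^ e = π ^ (e - k) * π ^ k := by rw [← pow_add]; congr 1; omega
      rw [hsplit, mul_comm r (π ^ k), mul_comm (π ^ (e-k)) (π ^ k)]
      exact mul_dvd_mul_iff_left (pow_ne_zero k hπ.ne_zero)
  exact ⟨(LinearEquiv.ofEq _ _ hrange.symm).trans
    ((LinearMap.quotKerEquivRange φ).symm.trans (Submodule.quotEquivOfEq _ _ hker))⟩

/-- Cardinality of `R ⧸ 𝔪^n`. -/
theorem aux_card_quot_pow (n : ℕ) :
    Nat.card (R ⧸ (maximalIdeal R ^ n : Ideal R)) =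
      Nat.card (R ⧸ (maximalIdeal R : Ideal R)) ^ n := by
  induction n with
  | zero =>
    rw [pow_zero, pow_zero]
    have : Subsingleton (R ⧸ ((maximalIdeal R : Ideal R) ^ 0 : Ideal R)) := by
      rw [pow_zero, Ideal.one_eq_top]
      exact Submodule.Quotient.subsingleton_iff.2 rfl
    exact Nat.card_eq_one_iff_unique.2 ⟨this, ⟨0⟩⟩
  | succ n ih =>
    set K : Ideal R := maximalIdeal R ^ (n + 1) with hK
    set S : Submodule R (R ⧸ K) :=
      (maximalIdeal R ^ n : Ideal R) • (⊤ : Submodule R (R ⧸ K)) with hS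
    have h1 : Nat.card (R ⧸ K) = Nat.card S * Nat.card ((R ⧸ K) ⧸ S) :=
      Submodule.card_eq_card_quotient_mul_card S
    obtain ⟨eS⟩ := aux_cyclic_smul_equiv (R := R) n (n + 1)
    have hcS : Nat.card S = Nat.card (R ⧸ (maximalIdeal R : Ideal R)) := by
      have h2 := Nat.card_congr eS.toEquiv
      have he : n + 1 - n = 1 := by omega
      rw [he, pow_one] at h2
      exact h2
    have hSmap : S = Submodule.map K.mkQ ((maximalIdeal R ^ n : Ideal R) : Submodule R R) :=
      aux_smul_top_quotient _ _
    have hle : K ≤ (maximalIdeal R ^ n : Ideal R) :=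
      Ideal.pow_le_pow_right (by omega)
    have hcQ : Nat.card ((R ⧸ K) ⧸ S) = Nat.card (R ⧸ (maximalIdeal R ^ n : Ideal R)) := by
      rw [hSmap]
      exact Nat.card_congr (Submodule.quotientQuotientEquivQuotient K _ hle).toEquiv
    rw [h1, hcS, hcQ, ih, pow_succ, mul_comm]

/-- Cardinality of `J • ⊤` is invariant under linear equivalence. -/
theorem aux_card_smul_top_congr {N N' : Type*} [AddCommGroup N] [Module R N]
    [AddCommGroup N'] [Module R N'] (e : N ≃ₗ[R] N') (J : Ideal R) :
    Nat.card ↥(J • (⊤ : Submodule R N)) = Nat.card ↥(J • (⊤ : Submodule R N')) := by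
  have h : Submodule.map (e : N →ₗ[R] N') (J • (⊤ : Submodule R N)) =
      J • (⊤ : Submodule R N') := by
    rw [Submodule.map_smul'', Submodule.map_top, LinearEquiv.range]
  have := Nat.card_congr (e.submoduleMap (J • (⊤ : Submodule R N))).toEquiv
  rw [this, h]

/-- Iterated smul: `𝔪^k • ⊤` inside `↥(𝔪^d • ⊤)` has the cardinality of `𝔪^(k+d) • ⊤`. -/
theorem aux_card_nested (N : Type*) [AddCommGroup N] [Module R N] (k dd : ℕ) :
    Nat.card ↥((maximalIdeal R ^ k : Ideal R) •
        (⊤ : Submodule R ↥((maximalIdeal R ^ dd : Ideal R) • (⊤ : Submodule R N)))) =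
      Nat.card ↥((maximalIdeal R ^ (k + dd) : Ideal R) • (⊤ : Submodule R N)) := by
  set p : Submodule R N := (maximalIdeal R ^ dd : Ideal R) • ⊤ with hp
  have h1 : Submodule.map p.subtype
      ((maximalIdeal R ^ k : Ideal R) • (⊤ : Submodule R ↥p)) =
      (maximalIdeal R ^ (k + dd) : Ideal R) • (⊤ : Submodule R N) := by
    rw [Submodule.map_smul'', Submodule.map_top, Submodule.range_subtype, hp,
      ← Submodule.smul_assoc, smul_eq_mul, ← pow_add]
  have := Nat.card_congr (Submodule.equivMapOfInjective p.subtype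
    (Submodule.injective_subtype p)
    ((maximalIdeal R ^ k : Ideal R) • (⊤ : Submodule R ↥p))).toEquiv
  rw [this, h1]

end Aux

section Counting

/-- From equality of truncated sums, equality of fiber counts above `d`. -/
theorem aux_count_from_sums {n m d : ℕ} (e : Fin n → ℕ) (f : Fin m → ℕ)
    (hS : ∀ k, d ≤ k → (∑ i, (e i - k)) = ∑ j, (f j - k)) :
    ∀ v, d < v → Fintype.card {i // e i = v} = Fintype.card {j // f j = v} := by
  have hstep : ∀ {N : ℕ} (g : Fin N → ℕ) (k : ℕ),
      (∑ i, (g i - k)) = (∑ i, (g i - (k + 1))) +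
        (Finset.univ.filter (fun i => k < g i)).card := by
    intro N g k
    rw [Finset.card_filter, ← Finset.sum_add_distrib]
    apply Finset.sum_congr rfl
    intro i _
    split <;> omega
  have hA : ∀ k, d ≤ k →
      (Finset.univ.filter (fun i => k < e i)).card =
      (Finset.univ.filter (fun j => k < f j)).card := by
    intro k hk
    have h1 := hstep e k
    have h2 := hstep f k
    have h3 := hS k hk
    have h4 := hS (k + 1) (by omega)
    omega
  intro v hv
  have hsplit : ∀ {N : ℕ} (g : Fin N → ℕ),
      (Finset.univ.filter (fun i => v - 1 < g i)).card =
      (Finset.univ.filter (fun i => g i = v)).card +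
      (Finset.univ.filter (fun i => v < g i)).card := by
    intro N g
    rw [← Finset.card_union_of_disjoint]
    · congr 1
      rw [← Finset.filter_or]
      apply Finset.filter_congr
      intro i _
      constructor <;> intro h <;> omega
    · rw [Finset.disjoint_filter]
      intro i _ h1 h2
      omega
  rw [Fintype.card_subtype, Fintype.card_subtype]
  have h5 := hA (v - 1) (by omega)
  have h6 := hA v (by omega)
  have h7 := hsplit e
  have h8 := hsplit f
  omega

/-- Given equal fiber counts, there is a matching bijection. -/
theorem aux_exists_matching {α β : Type*} [Fintype α] [Fintype β] [DecidableEq α]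
    [DecidableEq β] (e : α → ℕ) (f : β → ℕ)
    (h : ∀ v, Fintype.card {a // e a = v} = Fintype.card {b // f b = v}) :
    ∃ σ : α ≃ β, ∀ a, f (σ a) = e a := by
  classical
  let σ : α ≃ β :=
    (Equiv.sigmaFiberEquiv e).symm.trans
      ((Equiv.sigmaCongrRight (fun v => Fintype.equivOfCardEq (h v))).trans
        (Equiv.sigmaFiberEquiv f))
  exact ⟨σ, fun a => ((Fintype.equivOfCardEq (h (e a))) ⟨a, rfl⟩).2⟩

end Counting

section Helpers

variable {R : Type*} [CommRing R]

/-- Drop a subsingleton second factor. -/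
def auxProdSubsingletonEquiv (A B : Type*) [AddCommGroup A] [Module R A]
    [AddCommGroup B] [Module R B] [Subsingleton B] : (A × B) ≃ₗ[R] A :=
  LinearEquiv.ofLinear (LinearMap.fst R A B) (LinearMap.inl R A B)
    (by ext x; rfl)
    (by
      refine LinearMap.ext fun x => ?_
      exact Prod.ext rfl (Subsingleton.elim _ _))

/-- Any two subsingleton modules are equivalent. -/
def auxSubsingletonEquiv (A B : Type*) [AddCommGroup A] [Module R A]
    [AddCommGroup B] [Module R B] [Subsingleton A] [Subsingleton B] : A ≃ₗ[R] B :=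
  LinearEquiv.ofLinear 0 0 (LinearMap.ext fun x => Subsingleton.elim _ _)
    (LinearMap.ext fun x => Subsingleton.elim _ _)

/-- `Equiv.piEquivPiSubtypeProd` as a linear equivalence. -/
def auxPiSplit {ι : Type*} (p : ι → Prop) [DecidablePred p] (A : ι → Type*)
    [∀ i, AddCommGroup (A i)] [∀ i, Module R (A i)] :
    (∀ i, A i) ≃ₗ[R] (∀ i : {x // p x}, A i) × (∀ i : {x // ¬ p x}, A i) :=
  { Equiv.piEquivPiSubtypeProd p A with
    map_add' := fun x y => rfl
    map_smul' := fun r x => rfl }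

end Helpers

section Dich

universe u
variable {R : Type u} [CommRing R] [IsDomain R] [IsDiscreteValuationRing R]

theorem aux_dichotomy {H : Type*} [AddCommGroup H] [Module R H] {d : ℕ} (hd : 1 ≤ d)
    {m : ℕ} {f : Fin m → ℕ}
    (eH : H ≃ₗ[R] ∀ j : Fin m, R ⧸ (maximalIdeal R ^ (f j) : Ideal R))
    (htors : Submodule.torsionBySet R H ((maximalIdeal R : Ideal R) : Set R) ≤
      (maximalIdeal R ^ d : Ideal R) • (⊤ : Submodule R H)) :
    ∀ j, f j = 0 ∨ d < f j := by
  intro j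
  by_contra hc
  push_neg at hc
  obtain ⟨hj1, hj2⟩ := hc
  obtain ⟨π, hπ⟩ := IsDiscreteValuationRing.exists_irreducible R
  have hm : maximalIdeal R = Ideal.span {π} := hπ.maximalIdeal_eq
  have hmk : ∀ t : ℕ, (maximalIdeal R ^ t : Ideal R) = Ideal.span {π ^ t} := by
    intro t; rw [hm, Ideal.span_singleton_pow]
  have hpow : π ^ f j = π * π ^ (f j - 1) := by
    rw [← pow_succ']
    congr 1
    omega
  set x : ∀ j' : Fin m, R ⧸ (maximalIdeal R ^ (f j') : Ideal R) :=
    Pi.single j (Submodule.Quotient.mk (π ^ (f j - 1))) with hx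
  have hy : eH.symm x ∈ Submodule.torsionBySet R H
      ((maximalIdeal R : Ideal R) : Set R) := by
    rw [Submodule.mem_torsionBySet_iff]
    rintro ⟨a, ha⟩
    have hax : a • x = 0 := by
      funext j'
      rcases eq_or_ne j' j with rfl | hne
      · have : x j' = Submodule.Quotient.mk (π ^ (f j' - 1)) := by
          rw [hx]; simp
        rw [Pi.smul_apply, this, ← Submodule.Quotient.mk_smul, Pi.zero_apply]
        rw [Submodule.Quotient.mk_eq_zero, smul_eq_mul, hmk, Ideal.mem_span_singleton]
        have ha2 : a ∈ maximalIdeal R := ha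
        rw [hm, Ideal.mem_span_singleton] at ha2
        rw [hpow]
        exact mul_dvd_mul ha2 dvd_rfl
      · have : x j' = 0 := by rw [hx]; simp [Pi.single_eq_of_ne hne]
        rw [Pi.smul_apply, this, smul_zero, Pi.zero_apply]
    simp only [← map_smul, hax, map_zero]
  have hx2 : x ∈ (maximalIdeal R ^ d : Ideal R) •
      (⊤ : Submodule R (∀ j' : Fin m, R ⧸ (maximalIdeal R ^ (f j') : Ideal R))) := by
    have h1 := htors hy
    have h2 : Submodule.map eH.toLinearMap
        ((maximalIdeal R ^ d : Ideal R) • (⊤ : Submodule R H)) =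
        (maximalIdeal R ^ d : Ideal R) • ⊤ := by
      rw [Submodule.map_smul'', Submodule.map_top, LinearEquiv.range]
    rw [← h2]
    refine ⟨eH.symm x, h1, ?_⟩
    simp
  rw [aux_smul_top_pi] at hx2
  have hx3 := Submodule.mem_pi.1 hx2 j trivial
  rw [aux_smul_top_quotient] at hx3
  obtain ⟨r, hr, hrx⟩ := hx3
  have hxj : x j = Submodule.Quotient.mk (π ^ (f j - 1)) := by rw [hx]; simp
  rw [hxj] at hrx
  have hsub : (π ^ (f j - 1) - r) ∈ (maximalIdeal R ^ (f j) : Ideal R) := by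
    rw [← Submodule.Quotient.eq]
    exact hrx.symm
  have hrm : r ∈ (maximalIdeal R ^ (f j) : Ideal R) :=
    Ideal.pow_le_pow_right hj2 hr
  have hmem : π ^ (f j - 1) ∈ (maximalIdeal R ^ (f j) : Ideal R) := by
    have := Submodule.add_mem _ hsub hrm
    simpa using this
  rw [hmk, Ideal.mem_span_singleton, hpow] at hmem
  have h9 : π * π ^ (f j - 1) ∣ 1 * π ^ (f j - 1) := by rw [one_mul]; exact hmem
  have h10 : π ∣ 1 := (mul_dvd_mul_iff_right (pow_ne_zero (f j - 1) hπ.ne_zero)).1 h9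
  exact hπ.not_isUnit (isUnit_of_dvd_one h10)

end Dich

theorem aux_hcard {R : Type*} [CommRing R] [IsDomain R] [IsDiscreteValuationRing R]
    (N : Type*) [AddCommGroup N] [Module R N] {nn : ℕ} (g : Fin nn → ℕ)
    (eN : N ≃ₗ[R] ∀ i, R ⧸ (maximalIdeal R ^ (g i) : Ideal R)) (k : ℕ) :
    Nat.card ↥((maximalIdeal R ^ k : Ideal R) • (⊤ : Submodule R N)) =
      Nat.card (R ⧸ (maximalIdeal R : Ideal R)) ^ (∑ i, (g i - k)) := by
  rw [aux_card_smul_top_congr eN, aux_smul_top_pi,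
    Nat.card_congr (auxPiSubmoduleEquiv _ _).toEquiv, Nat.card_pi,
    ← Finset.prod_pow_eq_pow_sum]
  apply Finset.prod_congr rfl
  intro i _
  obtain ⟨ei⟩ := aux_cyclic_smul_equiv (R := R) k (g i)
  rw [Nat.card_congr ei.toEquiv, aux_card_quot_pow]

/-- Over a DVR `R` with `I = 𝔪^d` (`d ≥ 1`), if `H` is a finite `R`-module with
`H[𝔪] ⊆ IH` and `M` is a finite `R`-module with `IM ≅ IH`, then `M ≅ H ⊕ B` for some
`R`-module `B` annihilated by `I`. -/
theorem stmt_9 (R : Type*) [CommRing R] [IsDomain R] [IsDiscreteValuationRing R]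
    (d : ℕ) (hd : 1 ≤ d) (I : Ideal R) (hI : I = (IsLocalRing.maximalIdeal R) ^ d)
    (H : Type*) [AddCommGroup H] [Module R H] [Finite H]
    (htors : Submodule.torsionBySet R H ((IsLocalRing.maximalIdeal R : Ideal R) : Set R) ≤
      I • (⊤ : Submodule R H))
    (M : Type*) [AddCommGroup M] [Module R M] [Finite M]
    (hiso : Nonempty (↥(I • (⊤ : Submodule R M)) ≃ₗ[R] ↥(I • (⊤ : Submodule R H)))) :
    ∃ B : Submodule R M, (∀ x ∈ B, ∀ a ∈ I, a • x = 0) ∧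
      Nonempty (M ≃ₗ[R] H × ↥B) := by
  classical
  subst hI
  obtain ⟨n, e, ⟨eM⟩⟩ := aux_exists_pi_equiv (R := R) M
  obtain ⟨m, f, ⟨eH⟩⟩ := aux_exists_pi_equiv (R := R) H
  have hf : ∀ j, f j = 0 ∨ d < f j := aux_dichotomy hd eH htors
  by_cases hH : Subsingleton H
  · -- degenerate case : `H` is trivial
    have h0 : ((maximalIdeal R ^ d : Ideal R) • (⊤ : Submodule R M)) = ⊥ := by
      obtain ⟨eiso⟩ := hiso
      haveI : Subsingleton ↥((maximalIdeal R ^ d : Ideal R) • (⊤ : Submodule R M)) :=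
        eiso.toEquiv.subsingleton
      rw [Submodule.eq_bot_iff]
      intro x hx
      have h1 := Subsingleton.elim
        (α := ↥((maximalIdeal R ^ d : Ideal R) • (⊤ : Submodule R M)))
        ⟨x, hx⟩ ⟨0, Submodule.zero_mem _⟩
      exact Subtype.ext_iff.1 h1
    refine ⟨⊤, ?_, ⟨?_⟩⟩
    · intro x hx a ha
      have h2 : a • x ∈ ((maximalIdeal R ^ d : Ideal R) • (⊤ : Submodule R M)) :=
        Submodule.smul_mem_smul ha Submodule.mem_top
      rw [h0, Submodule.mem_bot] at h2
      exact h2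
    · exact (Submodule.topEquiv (R := R) (M := M)).symm.trans
        ((LinearEquiv.prodComm R H ↥(⊤ : Submodule R M)).trans
          (auxProdSubsingletonEquiv _ H)).symm
  · -- main case
    rw [not_subsingleton_iff_nontrivial] at hH
    have hex : ∃ j, Nontrivial (R ⧸ (maximalIdeal R ^ (f j) : Ideal R)) := by
      by_contra hcon
      push_neg at hcon
      haveI : ∀ j, Subsingleton (R ⧸ (maximalIdeal R ^ (f j) : Ideal R)) := by
        intro j
        rw [← not_nontrivial_iff_subsingleton]
        exact not_nontrivial_iff_subsingleton.2 (hcon j)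
      exact (not_subsingleton_iff_nontrivial.2 hH) eH.toEquiv.subsingleton
    obtain ⟨j0, hj0⟩ := hex
    haveI := hj0
    have hfj0 : f j0 ≠ 0 := by
      intro h0
      haveI : Subsingleton (R ⧸ (maximalIdeal R ^ (f j0) : Ideal R)) := by
        rw [h0, pow_zero, Ideal.one_eq_top]
        exact Submodule.Quotient.subsingleton_iff.2 rfl
      exact (not_subsingleton_iff_nontrivial.2 hj0) this
    haveI hfin1 : Finite (R ⧸ (maximalIdeal R ^ (f j0) : Ideal R)) := by
      refine Finite.of_surjective (fun h : H => eH h j0) ?_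
      intro z
      refine ⟨eH.symm (Pi.single j0 z), ?_⟩
      simp
    haveI hfinq : Finite (R ⧸ (maximalIdeal R : Ideal R)) := by
      have hle : (maximalIdeal R ^ (f j0) : Ideal R) ≤ maximalIdeal R :=
        Ideal.pow_le_self hfj0
      refine Finite.of_surjective (Ideal.Quotient.factor hle) ?_
      intro z
      obtain ⟨r, hr⟩ := Ideal.Quotient.mk_surjective z
      exact ⟨Ideal.Quotient.mk _ r, by rw [Ideal.Quotient.factor_mk, hr]⟩
    set q := Nat.card (R ⧸ (maximalIdeal R : Ideal R)) with hq'
    haveI : Nontrivial (R ⧸ (maximalIdeal R : Ideal R)) :=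
      Submodule.Quotient.nontrivial_iff.2 (Ideal.IsMaximal.ne_top inferInstance)
    have hq : 2 ≤ q := Finite.one_lt_card
    have hsum : ∀ k, d ≤ k → (∑ i, (e i - k)) = ∑ j, (f j - k) := by
      intro k hk
      obtain ⟨eiso⟩ := hiso
      have h2 := aux_card_nested (R := R) M (k - d) d
      have h3 := aux_card_nested (R := R) H (k - d) d
      have he : k - d + d = k := by omega
      rw [he] at h2 h3
      have h4 := aux_card_smul_top_congr eiso ((maximalIdeal R ^ (k - d) : Ideal R))
      have h1 : Nat.card ↥((maximalIdeal R ^ k : Ideal R) • (⊤ : Submodule R M)) =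
          Nat.card ↥((maximalIdeal R ^ k : Ideal R) • (⊤ : Submodule R H)) := by
        rw [← h2, ← h3, h4]
      rw [aux_hcard M e eM k, aux_hcard H f eH k] at h1
      exact Nat.pow_right_injective hq h1
    have hcnt := aux_count_from_sums e f hsum
    have hfib : ∀ v, Fintype.card {a : {i : Fin n // d < e i} // e a.1 = v} =
        Fintype.card {b : {j : Fin m // d < f j} // f b.1 = v} := by
      intro v
      rcases le_or_gt v d with hv | hv
      · haveI h1 : IsEmpty {a : {i : Fin n // d < e i} // e a.1 = v} :=
          ⟨fun x => by have := x.1.2; have := x.2; omega⟩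
        haveI h2 : IsEmpty {b : {j : Fin m // d < f j} // f b.1 = v} :=
          ⟨fun x => by have := x.1.2; have := x.2; omega⟩
        rw [Fintype.card_eq_zero, Fintype.card_eq_zero]
      · have e1 : {a : {i : Fin n // d < e i} // e a.1 = v} ≃ {i : Fin n // e i = v} :=
          ⟨fun x => ⟨x.1.1, x.2⟩, fun i => ⟨⟨i.1, by have := i.2; omega⟩, i.2⟩,
            fun x => rfl, fun x => rfl⟩
        have e2 : {b : {j : Fin m // d < f j} // f b.1 = v} ≃ {j : Fin m // f j = v} :=
          ⟨fun x => ⟨x.1.1, x.2⟩, fun j => ⟨⟨j.1, by have := j.2; omega⟩, j.2⟩,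
            fun x => rfl, fun x => rfl⟩
        rw [Fintype.card_congr e1, Fintype.card_congr e2]
        exact hcnt v hv
    obtain ⟨σ, hσ⟩ := aux_exists_matching
      (fun a : {i : Fin n // d < e i} => e a.1)
      (fun b : {j : Fin m // d < f j} => f b.1) hfib
    let eM2 : M ≃ₗ[R]
        (∀ a : {i : Fin n // d < e i}, R ⧸ (maximalIdeal R ^ (e a.1) : Ideal R)) ×
        (∀ a : {i : Fin n // ¬ d < e i}, R ⧸ (maximalIdeal R ^ (e a.1) : Ideal R)) :=
      eM.trans (auxPiSplit _ _)
    haveI hsub2 : Subsingleton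
        (∀ b : {j : Fin m // ¬ d < f j}, R ⧸ (maximalIdeal R ^ (f b.1) : Ideal R)) := by
      have hcomp : ∀ b : {j : Fin m // ¬ d < f j},
          Subsingleton (R ⧸ (maximalIdeal R ^ (f b.1) : Ideal R)) := by
        intro b
        have h0 : f b.1 = 0 := by
          rcases hf b.1 with h | h
          · exact h
          · exact absurd h b.2
        rw [h0, pow_zero, Ideal.one_eq_top]
        exact Submodule.Quotient.subsingleton_iff.2 rfl
      exact ⟨fun x y => funext fun b => @Subsingleton.elim _ (hcomp b) _ _⟩
    let eH2 : H ≃ₗ[R]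
        (∀ b : {j : Fin m // d < f j}, R ⧸ (maximalIdeal R ^ (f b.1) : Ideal R)) :=
      (eH.trans (auxPiSplit _ _)).trans (auxProdSubsingletonEquiv _ _)
    let mid : (∀ a : {i : Fin n // d < e i}, R ⧸ (maximalIdeal R ^ (e a.1) : Ideal R)) ≃ₗ[R]
        (∀ b : {j : Fin m // d < f j}, R ⧸ (maximalIdeal R ^ (f b.1) : Ideal R)) :=
      (LinearEquiv.piCongrRight fun a =>
          Submodule.quotEquivOfEq _ _ (by rw [hσ a])).trans
        (LinearEquiv.piCongrLeft R
          (fun b : {j : Fin m // d < f j} => R ⧸ (maximalIdeal R ^ (f b.1) : Ideal R)) σ)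
    let g : (∀ a : {i : Fin n // ¬ d < e i}, R ⧸ (maximalIdeal R ^ (e a.1) : Ideal R))
        →ₗ[R] M := eM2.symm.toLinearMap ∘ₗ LinearMap.inr R _ _
    have hg : Function.Injective g :=
      eM2.symm.injective.comp LinearMap.inr_injective
    refine ⟨LinearMap.range g, ?_, ⟨?_⟩⟩
    · rintro x ⟨y, rfl⟩ a ha
      have hy0 : a • y = 0 := by
        funext c
        obtain ⟨r, hr⟩ := Submodule.Quotient.mk_surjective _ (y c)
        have hcle : (maximalIdeal R ^ d : Ideal R) ≤ maximalIdeal R ^ (e c.1) :=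
          Ideal.pow_le_pow_right (by have := c.2; omega)
        have har : a ∈ (maximalIdeal R ^ (e c.1) : Ideal R) := hcle ha
        have : a • y c = 0 := by
          rw [← hr, ← Submodule.Quotient.mk_smul, Submodule.Quotient.mk_eq_zero]
          rw [smul_eq_mul]
          exact Ideal.mul_mem_right r _ har
        rw [Pi.smul_apply, this, Pi.zero_apply]
      rw [← map_smul, hy0, map_zero]
    · exact eM2.trans (LinearEquiv.prodCongr (mid.trans eH2.symm)
        (LinearEquiv.ofInjective g hg))
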